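/- Let Λ = diag(λ₁,…,λ_n) be a diagonal real matrix and let k : ℝ → Matrix (Fin n) (Fin n) ℝ be continuous and satisfy, for every t, k'(t) = M(k(t)·Λ·k(t)ᵀ)·k(t) and k(t)ᵀ·k(t) = 1. If for some column index i and some time t₀ the first-row entry vanishes, k(t₀)_{1i} = 0, then k(t)_{1i} = 0 for all t ∈ ℝ. (The zero surfaces of the functions F_i are invariant surfaces of the Toda flow.) -/

import Mathlib

open Matrix

attribute [local instance] Matrix.normedAddCommGroup Matrix.normedSpace

/-- The Toda projection: `M(A)_{ij} = A_{ij}` for `i < j`, `M(A)_{ij} = -A_{ji}` for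
`i > j`, and `M(A)_{ii} = 0`. -/
def todaProj {n : ℕ} (A : Matrix (Fin n) (Fin n) ℝ) : Matrix (Fin n) (Fin n) ℝ :=
  Matrix.of fun i j => if i < j then A i j else if j < i then -A j i else 0

/-- The zero surfaces of the first-row entries are invariant surfaces of the Toda flow:
if a continuous orthogonal solution `k(t)` of `k' = M(k·Λ·kᵀ)·k`, `Λ = diag(λ)`, has
`k(t₀)_{1i} = 0` at some time `t₀`, then `k(t)_{1i} = 0` for all `t`. -/
theorem first_row_zero_invariant {n : ℕ} (lam : Fin (n + 1) → ℝ)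
    (k : ℝ → Matrix (Fin (n + 1)) (Fin (n + 1)) ℝ)
    (hcont : Continuous k)
    (hk : ∀ t, HasDerivAt k
      (todaProj (k t * Matrix.diagonal lam * (k t)ᵀ) * k t) t)
    (horth : ∀ t, (k t)ᵀ * k t = 1)
    (i : Fin (n + 1)) (t₀ : ℝ) (h0 : k t₀ 0 i = 0) :
    ∀ t : ℝ, k t 0 i = 0 := by
  set f : ℝ → ℝ := fun t => k t 0 i with hfdef
  set B : ℝ → Matrix (Fin (n + 1)) (Fin (n + 1)) ℝ :=
    fun t => k t * Matrix.diagonal lam * (k t)ᵀ with hBdef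
  set g : ℝ → ℝ := fun t => lam i - B t 0 0 with hgdef
  have hBcont : Continuous B :=
    (hcont.matrix_mul continuous_const).matrix_mul hcont.matrix_transpose
  have hgcont : Continuous g := continuous_const.sub (hBcont.matrix_elem 0 0)
  -- the entry satisfies the linear ODE f' = g f
  have hf : ∀ t, HasDerivAt f (g t * f t) t := by
    intro t
    have hBk : B t * k t = k t * Matrix.diagonal lam := by
      calc B t * k t = k t * Matrix.diagonal lam * ((k t)ᵀ * k t) := by
            rw [hBdef, Matrix.mul_assoc]
        _ = k t * Matrix.diagonal lam := by rw [horth t, Matrix.mul_one]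
    have h1 : ∀ j, todaProj (B t) 0 j = B t 0 j - (if j = 0 then B t 0 0 else 0) := by
      intro j
      rcases eq_or_ne j 0 with hj | hj
      · subst hj; simp [todaProj]
      · have hpos : (0 : Fin (n + 1)) < j := Fin.pos_of_ne_zero hj
        simp [todaProj, hpos, hj]
    have hentry : (todaProj (B t) * k t) 0 i = g t * f t := by
      have : (todaProj (B t) * k t) 0 i
          = ∑ j, (B t 0 j * k t j i - (if j = 0 then B t 0 0 else 0) * k t j i) := by
        rw [Matrix.mul_apply]
        exact Finset.sum_congr rfl fun j _ => by rw [h1 j, sub_mul]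
      rw [this, Finset.sum_sub_distrib]
      have hs1 : ∑ j, B t 0 j * k t j i = (B t * k t) 0 i := (Matrix.mul_apply).symm
      have hs2 : (∑ j, (if j = 0 then B t 0 0 else 0) * k t j i) = B t 0 0 * k t 0 i := by
        rw [Finset.sum_eq_single 0 (fun j _ hj => by simp [hj])
          (fun h => absurd (Finset.mem_univ _) h)]
        simp
      rw [hs1, hs2, hBk, Matrix.mul_diagonal]
      simp only [hgdef, hfdef]
      ring
    -- transport the matrix derivative to the entry
    let E : Matrix (Fin (n + 1)) (Fin (n + 1)) ℝ →ₗ[ℝ] ℝ :=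
      { toFun := fun A => A 0 i, map_add' := fun _ _ => rfl, map_smul' := fun _ _ => rfl }
    have hD := (E.toContinuousLinearMap.hasFDerivAt
      (x := k t)).comp_hasDerivAt t (hk t)
    have : HasDerivAt (fun s => k s 0 i)
        (E.toContinuousLinearMap (todaProj (B t) * k t)) t := hD
    rw [show E.toContinuousLinearMap (todaProj (B t) * k t)
        = (todaProj (B t) * k t) 0 i from rfl, hentry] at this
    exact this
  -- integrating factor
  set G : ℝ → ℝ := fun t => ∫ s in t₀..t, g s with hGdef
  have hG : ∀ t, HasDerivAt G (g t) t := fun t =>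
    intervalIntegral.integral_hasDerivAt_right (hgcont.intervalIntegrable _ _)
      (hgcont.stronglyMeasurableAtFilter _ _) hgcont.continuousAt
  have hh : ∀ t, HasDerivAt (fun t => f t * Real.exp (-G t)) 0 t := by
    intro t
    have h1 : HasDerivAt (fun t => f t * Real.exp (-G t))
        (g t * f t * Real.exp (-G t) + f t * (Real.exp (-G t) * -g t)) t :=
      (hf t).mul ((hG t).neg.exp)
    convert h1 using 1
    ring
  have hconst := is_const_of_deriv_eq_zero
    (f := fun t => f t * Real.exp (-G t))
    (fun t => (hh t).differentiableAt) (fun t => (hh t).deriv)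
  intro t
  have := hconst t t₀
  simp only [hfdef] at this
  rw [h0, zero_mul, mul_eq_zero] at this
  rcases this with h | h
  · exact h
  · exact absurd h (Real.exp_ne_zero _)
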